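/- Let p be a prime, let a and h be positive integers, and let m be an integer not divisible by p. Let u : ℤ → ℤ be the (unique) sequence satisfying u_0 = u_1 = ⋯ = u_{h−1} = 0, u_h = 1, and ∑_{j=0}^{h+1} (binom(h+1, j) − m·[j = h]) · u_{n+j} = 0 for all n ∈ ℤ (such a sequence exists and takes integer values since the coefficients of u_n and u_{n+h+1} in the recurrence are both 1). Then for every integer d with −h+1 ≤ d ≤ h·p^a, in ℤ/pℤ one has ∑_{k=0}^{p^a−1} binom((h+1)k, k+d)·(m^k)⁻¹ = −∑_{r=1}^{h} binom(h+1, r+1) · u_{h−1+min(d−r·p^a, 0)}. -/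

import Mathlib

/-- Binomial coefficient with an integer lower index: zero for negative lower index. -/
def ibinom (n : ℕ) (j : ℤ) : ℕ := if 0 ≤ j then n.choose j.toNat else 0

open Finset

lemma ibinom_natCast (n k : ℕ) : ibinom n (k : ℤ) = n.choose k := by
  simp [ibinom]

lemma ibinom_neg (n : ℕ) {j : ℤ} (hj : j < 0) : ibinom n j = 0 := by
  simp [ibinom, not_le.mpr hj]

lemma ibinom_zero_left (j : ℤ) : ibinom 0 j = if j = 0 then 1 else 0 := by
  rcases lt_trichotomy j 0 with hj | hj | hj
  · rw [ibinom_neg _ hj, if_neg hj.ne]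
  · subst hj; simp [ibinom]
  · rw [if_neg hj.ne', ibinom]
    rw [if_pos hj.le, Nat.choose_eq_zero_of_lt]
    omega
  
lemma ibinom_eq_zero_of_lt {n : ℕ} {j : ℤ} (hj : (n : ℤ) < j) : ibinom n j = 0 := by
  have h0 : 0 ≤ j := le_trans (Int.natCast_nonneg n) hj.le
  rw [ibinom, if_pos h0, Nat.choose_eq_zero_of_lt]
  omega

lemma ibinom_vandermonde (A B : ℕ) (n : ℤ) :
    ibinom (A + B) n = ∑ j ∈ range (B + 1), B.choose j * ibinom A (n - (j : ℤ)) := by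
  rcases lt_or_ge n 0 with hn | hn
  · rw [ibinom_neg _ hn, Finset.sum_eq_zero]
    intro j _
    rw [ibinom_neg _ (by omega), mul_zero]
  · obtain ⟨t, rfl⟩ := Int.eq_ofNat_of_zero_le hn
    rw [ibinom_natCast]
    have key : (A + B).choose t = ∑ j ∈ range (t + 1), B.choose j * A.choose (t - j) := by
      rw [add_comm A B, Nat.add_choose_eq,
        Finset.Nat.sum_antidiagonal_eq_sum_range_succ_mk]
    rw [key]
    have e1 : ∑ j ∈ range (t + 1), B.choose j * A.choose (t - j)
        = ∑ j ∈ range (t + 1), B.choose j * ibinom A ((t : ℤ) - (j : ℤ)) := by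
      apply Finset.sum_congr rfl
      intro j hj
      simp only [mem_range] at hj
      congr 1
      rw [show (t : ℤ) - (j : ℤ) = ((t - j : ℕ) : ℤ) by omega, ibinom_natCast]
    rw [e1]
    have e2 : ∑ j ∈ range (t + 1), B.choose j * ibinom A ((t : ℤ) - (j : ℤ))
        = ∑ j ∈ range (B + t + 1), B.choose j * ibinom A ((t : ℤ) - (j : ℤ)) := by
      apply Finset.sum_subset
      · intro x hx
        simp only [mem_range] at hx ⊢
        omega
      · intro j _ hj
        simp only [mem_range, not_lt] at hj
        rw [ibinom_neg _ (by omega), mul_zero]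
    have e3 : ∑ j ∈ range (B + 1), B.choose j * ibinom A ((t : ℤ) - (j : ℤ))
        = ∑ j ∈ range (B + t + 1), B.choose j * ibinom A ((t : ℤ) - (j : ℤ)) := by
      apply Finset.sum_subset
      · intro x hx
        simp only [mem_range] at hx ⊢
        omega
      · intro j _ hj
        simp only [mem_range, not_lt] at hj
        rw [Nat.choose_eq_zero_of_lt (by omega), zero_mul]
    rw [e2, e3]



lemma choose_mul_prime_pow (p : ℕ) (hp : p.Prime) (a c N : ℕ) :
    ((c * p ^ a).choose N : ZMod p)
      = if p ^ a ∣ N then (c.choose (N / p ^ a) : ZMod p) else 0 := by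
  haveI : Fact p.Prime := ⟨hp⟩
  have hp0 : 0 < p := hp.pos
  induction a generalizing N with
  | zero => simp
  | succ a ih =>
    have lucas := (ZMod.natCast_eq_natCast_iff
      ((c * p ^ (a + 1)).choose N)
      ((c * p ^ (a + 1) % p).choose (N % p) * (c * p ^ (a + 1) / p).choose (N / p)) p).mpr
      Choose.choose_modEq_choose_mod_mul_choose_div_nat
    have hdvd : p ∣ c * p ^ (a + 1) := Dvd.dvd.mul_left (dvd_pow_self p (by omega)) c
    have hmod : c * p ^ (a + 1) % p = 0 := Nat.mod_eq_zero_of_dvd hdvd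
    have hdiv : c * p ^ (a + 1) / p = c * p ^ a := by
      rw [pow_succ, ← mul_assoc, Nat.mul_div_cancel _ hp0]
    rw [hmod, hdiv] at lucas
    by_cases hN : p ∣ N
    · have hN0 : N % p = 0 := Nat.mod_eq_zero_of_dvd hN
      rw [hN0, Nat.choose_self, one_mul, ih] at lucas
      rw [lucas]
      have hiff : p ^ a ∣ N / p ↔ p ^ (a + 1) ∣ N := by
        rw [Nat.dvd_div_iff_mul_dvd hN, ← pow_succ']
      have hdd : N / p / p ^ a = N / p ^ (a + 1) := by
        rw [Nat.div_div_eq_div_mul, ← pow_succ']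
      by_cases h2 : p ^ (a + 1) ∣ N
      · rw [if_pos (hiff.mpr h2), if_pos h2, hdd]
      · rw [if_neg (fun hc => h2 (hiff.mp hc)), if_neg h2]
    · have hN0 : 0 < N % p := Nat.pos_of_ne_zero (fun hc => hN (Nat.dvd_of_mod_eq_zero hc))
      rw [Nat.choose_eq_zero_of_lt hN0, zero_mul, Nat.cast_zero] at lucas
      rw [lucas, if_neg (fun hc => hN (dvd_trans (dvd_pow_self p (by omega)) hc))]


theorem stmt_15 (p : ℕ) (hp : p.Prime) (a h : ℕ) (ha : 0 < a) (hh : 0 < h)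
    (m : ℤ) (hm : ¬ ((p : ℤ) ∣ m))
    (u : ℤ → ℤ)
    (hu0 : ∀ n : ℤ, 0 ≤ n → n < (h : ℤ) → u n = 0)
    (huh : u (h : ℤ) = 1)
    (hurec : ∀ n : ℤ,
      (∑ j ∈ Finset.range (h + 2),
        (((h + 1).choose j : ℤ) - m * (if j = h then 1 else 0)) * u (n + (j : ℤ))) = 0)
    (d : ℤ) (hd1 : -(h : ℤ) + 1 ≤ d) (hd2 : d ≤ (h : ℤ) * (p : ℤ) ^ a) :
    (∑ k ∈ Finset.range (p ^ a),
        (ibinom ((h + 1) * k) ((k : ℤ) + d) : ZMod p) * ((m : ZMod p) ^ k)⁻¹) =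
      -∑ r ∈ Finset.Icc 1 h,
        (((h + 1).choose (r + 1)) : ZMod p) *
          ((u ((h : ℤ) - 1 + min (d - (r : ℤ) * (p : ℤ) ^ a) 0) : ℤ) : ZMod p) := by
  haveI : Fact p.Prime := ⟨hp⟩
  have hpcast : ((p : ℤ)) ^ a = ((p ^ a : ℕ) : ℤ) := by push_cast; ring
  rw [hpcast] at hd2 ⊢
  set q : ℕ := p ^ a with hq
  set Q : ℤ := (q : ℤ) with hQdef
  set M : ZMod p := (m : ZMod p) with hMdef
  set U : ℤ → ZMod p := fun n => ((u n : ℤ) : ZMod p) with hUdef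
  have hMne : M ≠ 0 := by
    rw [hMdef, Ne, ZMod.intCast_zmod_eq_zero_iff_dvd]; exact hm
  have hq1 : 1 ≤ q := Nat.one_le_pow _ _ hp.pos
  have hQ1 : 1 ≤ Q := by rw [hQdef]; exact_mod_cast hq1
  set F : ℤ → ZMod p := fun e => ∑ k ∈ Finset.range q,
      (ibinom ((h + 1) * k) ((k : ℤ) + e) : ZMod p) * (M ^ k)⁻¹ with hF
  set G : ℤ → ZMod p := fun e => -∑ r ∈ Finset.Icc 1 h,
      (((h + 1).choose (r + 1)) : ZMod p) * U ((h : ℤ) - 1 + min (e - (r : ℤ) * Q) 0) with hG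
  show F d = G d
  -- basic facts about u
  have hum1 : u (-1) = -1 := by
    have h0 := hurec (-1)
    rw [Finset.sum_range_succ, Finset.sum_range_succ'] at h0
    have e1 : ∀ j ∈ Finset.range h,
        (((h + 1).choose (j + 1) : ℤ) - m * (if j + 1 = h then 1 else 0))
          * u (-1 + ((j + 1 : ℕ) : ℤ)) = 0 := by
      intro j hj
      simp only [Finset.mem_range] at hj
      have hz : u (-1 + ((j + 1 : ℕ) : ℤ)) = 0 := by
        apply hu0 <;> push_cast <;> omega
      rw [hz, mul_zero]
    rw [Finset.sum_eq_zero e1] at h0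
    rw [if_neg (by omega : ¬ (0 = h)), if_neg (by omega : ¬ (h + 1 = h)),
      Nat.choose_self, Nat.choose_zero_right] at h0
    rw [show (-1 : ℤ) + ((h + 1 : ℕ) : ℤ) = (h : ℤ) by push_cast; ring, huh] at h0
    push_cast at h0
    linarith
  have hurec' : ∀ n : ℤ, ∑ j ∈ Finset.range (h + 2),
      ((h + 1).choose j : ℤ) * u (n + (j : ℤ)) = m * u (n + (h : ℤ)) := by
    intro n
    have h0 := hurec n
    have e : ∀ j ∈ Finset.range (h + 2),
        (((h + 1).choose j : ℤ) - m * (if j = h then 1 else 0)) * u (n + (j : ℤ))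
          = ((h + 1).choose j : ℤ) * u (n + (j : ℤ))
            - (if j = h then m * u (n + (h : ℤ)) else 0) := by
      intro j _
      by_cases hj : j = h
      · subst hj; rw [if_pos rfl, if_pos rfl]; ring
      · rw [if_neg hj, if_neg hj]; ring
    rw [Finset.sum_congr rfl e, Finset.sum_sub_distrib,
      Finset.sum_ite_eq' (Finset.range (h + 2)) h (fun _ => m * u (n + (h : ℤ))),
      if_pos (Finset.mem_range.mpr (by omega))] at h0
    linarith
  have hUrec : ∀ n : ℤ, ∑ j ∈ Finset.range (h + 2),
      ((h + 1).choose j : ZMod p) * U (n + (j : ℤ)) = M * U (n + (h : ℤ)) := by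
    intro n
    have := congrArg (fun z : ℤ => (z : ZMod p)) (hurec' n)
    push_cast at this
    simpa [hUdef, hMdef] using this
  have hU0 : ∀ n : ℤ, 0 ≤ n → n < (h : ℤ) → U n = 0 := by
    intro n h1 h2; simp [hUdef, hu0 n h1 h2]
  have hUm1 : U (-1) = -1 := by simp [hUdef, hum1]
  have hUh1 : U ((h : ℤ) - 1) = 0 := hU0 _ (by omega) (by omega)
  -- Fermat: M ^ q = M
  have powfix : ∀ b : ℕ, ∀ x : ZMod p, x ^ p ^ b = x := by
    intro b
    induction b with
    | zero => intro x; rw [pow_zero, pow_one]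
    | succ b ih => intro x; rw [pow_succ, pow_mul, ih, ZMod.pow_card]
  have hMq : M ^ q = M := by rw [hq]; exact powfix a M
  -- the recurrence for F
  have starF : ∀ e : ℤ, ∑ j ∈ Finset.range (h + 2), ((h + 1).choose j : ZMod p) * F (e + 1 - j)
      = M * F e - M * (if e = 0 then 1 else 0) + (ibinom ((h + 1) * q) (Q + e) : ZMod p) := by
    intro e
    set A : ℕ → ZMod p := fun k =>
      (ibinom ((h + 1) * k) ((k : ℤ) + e) : ZMod p) * (M ^ k)⁻¹ with hA
    have vdm : ∀ k : ℕ, ∑ j ∈ Finset.range (h + 2),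
        ((h + 1).choose j : ZMod p) * (ibinom ((h + 1) * k) ((k : ℤ) + (e + 1 - (j : ℤ))) : ZMod p)
        = (ibinom ((h + 1) * (k + 1)) (((k + 1 : ℕ) : ℤ) + e) : ZMod p) := by
      intro k
      have hv := ibinom_vandermonde ((h + 1) * k) (h + 1) ((k : ℤ) + e + 1)
      have hv2 := congrArg (fun z : ℕ => (z : ZMod p)) hv
      push_cast at hv2
      rw [show (h + 1) * k + (h + 1) = (h + 1) * (k + 1) from by ring] at hv2
      rw [show ((k : ℤ) + e + 1) = (((k + 1 : ℕ) : ℤ) + e) from by push_cast; ring] at hv2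
      rw [hv2]
      apply Finset.sum_congr rfl
      intro j _
      congr 3
      push_cast
      ring
    have step1 : ∑ j ∈ Finset.range (h + 2), ((h + 1).choose j : ZMod p) * F (e + 1 - (j : ℤ))
        = ∑ k ∈ Finset.range q, M * A (k + 1) := by
      calc ∑ j ∈ Finset.range (h + 2), ((h + 1).choose j : ZMod p) * F (e + 1 - (j : ℤ))
          = ∑ j ∈ Finset.range (h + 2), ∑ k ∈ Finset.range q, ((h + 1).choose j : ZMod p) *
              ((ibinom ((h + 1) * k) ((k : ℤ) + (e + 1 - (j : ℤ))) : ZMod p) * (M ^ k)⁻¹) := by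
            apply Finset.sum_congr rfl
            intro j _
            rw [hF]
            exact Finset.mul_sum _ _ _
        _ = ∑ k ∈ Finset.range q, ∑ j ∈ Finset.range (h + 2), ((h + 1).choose j : ZMod p) *
              ((ibinom ((h + 1) * k) ((k : ℤ) + (e + 1 - (j : ℤ))) : ZMod p) * (M ^ k)⁻¹) :=
            Finset.sum_comm
        _ = ∑ k ∈ Finset.range q, (∑ j ∈ Finset.range (h + 2), ((h + 1).choose j : ZMod p) *
              (ibinom ((h + 1) * k) ((k : ℤ) + (e + 1 - (j : ℤ))) : ZMod p)) * (M ^ k)⁻¹ := by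
            apply Finset.sum_congr rfl
            intro k _
            rw [Finset.sum_mul]
            apply Finset.sum_congr rfl
            intro j _
            ring
        _ = ∑ k ∈ Finset.range q, (ibinom ((h + 1) * (k + 1)) (((k + 1 : ℕ) : ℤ) + e) : ZMod p)
              * (M ^ k)⁻¹ := by
            apply Finset.sum_congr rfl
            intro k _
            rw [vdm k]
        _ = ∑ k ∈ Finset.range q, M * A (k + 1) := by
            apply Finset.sum_congr rfl
            intro k _
            rw [hA]
            simp only
            rw [pow_succ, mul_inv]
            calc (ibinom ((h + 1) * (k + 1)) (((k + 1 : ℕ) : ℤ) + e) : ZMod p) * (M ^ k)⁻¹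
                = (ibinom ((h + 1) * (k + 1)) (((k + 1 : ℕ) : ℤ) + e) : ZMod p)
                    * ((M ^ k)⁻¹ * M⁻¹) * M := by
                  rw [mul_assoc, mul_assoc, mul_comm M⁻¹ M, mul_inv_cancel₀ hMne, mul_one]
              _ = M * ((ibinom ((h + 1) * (k + 1)) (((k + 1 : ℕ) : ℤ) + e) : ZMod p)
                    * ((M ^ k)⁻¹ * M⁻¹)) := by ring
    have hA0 : A 0 = if e = 0 then (1 : ZMod p) else 0 := by
      rw [hA]
      simp only [mul_zero, Nat.cast_zero, zero_add, pow_zero, inv_one, mul_one, ibinom_zero_left]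
      split <;> simp
    have hAq : M * A q = (ibinom ((h + 1) * q) (Q + e) : ZMod p) := by
      rw [hA]
      simp only
      rw [hMq, ← hQdef]
      calc M * ((ibinom ((h + 1) * q) (Q + e) : ZMod p) * M⁻¹)
          = (ibinom ((h + 1) * q) (Q + e) : ZMod p) * (M * M⁻¹) := by ring
        _ = (ibinom ((h + 1) * q) (Q + e) : ZMod p) := by
            rw [mul_inv_cancel₀ hMne, mul_one]
    have hFe : F e = ∑ k ∈ Finset.range q, A k := by rw [hF]
    have sumshift : ∑ k ∈ Finset.range q, A (k + 1) = F e + A q - A 0 := by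
      have h1 := Finset.sum_range_succ' A q
      have h2 := Finset.sum_range_succ A q
      linear_combination -h1 + h2 - hFe
    rw [step1, ← Finset.mul_sum, sumshift, hA0, mul_sub, mul_add, hAq]
    ring
  -- evaluation of the defect term
  have defectF : ∀ e : ℤ, 1 ≤ e → (ibinom ((h + 1) * q) (Q + e) : ZMod p)
      = ∑ r ∈ Finset.Icc 1 h, (((h + 1).choose (r + 1)) : ZMod p)
          * (if e = (r : ℤ) * Q then 1 else 0) := by
    intro e he
    have hQe : 0 ≤ Q + e := by linarith
    obtain ⟨N, hN⟩ : ∃ N : ℕ, Q + e = (N : ℤ) := ⟨(Q + e).toNat, (Int.toNat_of_nonneg hQe).symm⟩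
    rw [hN, ibinom_natCast, choose_mul_prime_pow p hp a (h + 1) N]
    have hqQ : ((q : ℕ) : ℤ) = Q := hQdef.symm
    by_cases hdvd : p ^ a ∣ N
    · rw [if_pos hdvd]
      obtain ⟨s, hNs⟩ := hdvd
      have hcast : Q * (s : ℤ) = Q + e := by
        rw [hN, hNs, ← hqQ]; push_cast [hq]; ring
      have hs2 : 2 ≤ s := by
        rcases Nat.lt_or_ge s 2 with hs' | hs'
        · exfalso; interval_cases s <;> omega
        · exact hs'
      have hNdiv : N / p ^ a = s := by rw [hNs, ← hq, Nat.mul_div_cancel_left s (by omega)]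
      rw [hNdiv]
      set r : ℕ := s - 1 with hr
      have her : e = (r : ℤ) * Q := by
        have : ((r : ℕ) : ℤ) = (s : ℤ) - 1 := by rw [hr]; push_cast [Nat.cast_sub (by omega : 1 ≤ s)]; ring
        rw [this]
        linear_combination -hcast
      have htrans : ∀ r' ∈ Finset.Icc 1 h,
          (((h + 1).choose (r' + 1)) : ZMod p) * (if e = (r' : ℤ) * Q then 1 else 0)
          = if r' = r then (((h + 1).choose (r' + 1)) : ZMod p) else 0 := by
        intro r' _
        by_cases hrr : r' = r
        · subst hrr
          rw [if_pos her, if_pos rfl, mul_one]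
        · rw [if_neg ?_, if_neg hrr, mul_zero]
          intro hc
          apply hrr
          have h1 : (r' : ℤ) * Q = (r : ℤ) * Q := by rw [← hc, her]
          have h2 : (r' : ℤ) = (r : ℤ) := by
            have hQne : Q ≠ 0 := by omega
            exact mul_right_cancel₀ hQne h1
          exact_mod_cast h2
      rw [Finset.sum_congr rfl htrans,
        Finset.sum_ite_eq' (Finset.Icc 1 h) r (fun r' => (((h + 1).choose (r' + 1)) : ZMod p))]
      by_cases hrh : r ∈ Finset.Icc 1 h
      · rw [if_pos hrh, show r + 1 = s from by omega]
      · rw [if_neg hrh]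
        simp only [Finset.mem_Icc, not_and_or, not_le] at hrh
        have hrbig : h < r := by omega
        rw [Nat.choose_eq_zero_of_lt (by omega : h + 1 < s), Nat.cast_zero]
    · rw [if_neg hdvd]
      symm
      apply Finset.sum_eq_zero
      intro r hr
      rw [if_neg ?_, mul_zero]
      intro hc
      apply hdvd
      have hNc : (N : ℤ) = ((p ^ a : ℕ) : ℤ) * ((r + 1 : ℕ) : ℤ) := by
        rw [← hN, hc, ← hq, hqQ]; push_cast; ring
      exact ⟨r + 1, by exact_mod_cast hNc⟩
  -- the recurrence for a single shifted copy of U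
  have starG1 : ∀ c e : ℤ, ∑ j ∈ Finset.range (h + 2),
      ((h + 1).choose j : ZMod p) * U ((h : ℤ) - 1 + min (e + 1 - (j : ℤ) - c) 0)
      = M * U ((h : ℤ) - 1 + min (e - c) 0) + (if e = c then -1 else 0) := by
    intro c e
    rcases lt_or_ge e c with hec | hec
    · -- e < c : the recurrence region
      have step1 : ∑ j ∈ Finset.range (h + 2),
          ((h + 1).choose j : ZMod p) * U ((h : ℤ) - 1 + min (e + 1 - (j : ℤ) - c) 0)
          = ∑ j ∈ Finset.range (h + 2),
            (fun j => ((h + 1).choose j : ZMod p) * U ((e - c - 1) + (j : ℤ))) (h + 2 - 1 - j) := by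
        apply Finset.sum_congr rfl
        intro j hj
        simp only [Finset.mem_range] at hj
        rw [min_eq_left (by omega)]
        congr 1
        · congr 1
          rw [show h + 2 - 1 - j = h + 1 - j from by omega,
            Nat.choose_symm (by omega : j ≤ h + 1)]
        · congr 1
          omega
      rw [step1, Finset.sum_range_reflect
        (fun j => ((h + 1).choose j : ZMod p) * U ((e - c - 1) + (j : ℤ))) (h + 2)]
      rw [hUrec (e - c - 1), min_eq_left (by omega : e - c ≤ 0),
        show e - c - 1 + (h : ℤ) = (h : ℤ) - 1 + (e - c) from by ring,
        if_neg (by omega : ¬ e = c), add_zero]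
    · -- c ≤ e : all terms vanish except possibly j = h + 1 with e = c
      have e1 : ∀ j ∈ Finset.range (h + 2),
          ((h + 1).choose j : ZMod p) * U ((h : ℤ) - 1 + min (e + 1 - (j : ℤ) - c) 0)
          = if j = h + 1 ∧ e = c then -1 else 0 := by
        intro j hj
        simp only [Finset.mem_range] at hj
        by_cases hcc : j = h + 1 ∧ e = c
        · obtain ⟨rfl, hec2⟩ := hcc
          rw [if_pos ⟨rfl, hec2⟩, min_eq_left (by push_cast; omega),
            show (h : ℤ) - 1 + (e + 1 - ((h + 1 : ℕ) : ℤ) - c) = -1 from by push_cast; omega,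
            hUm1, Nat.choose_self, Nat.cast_one, one_mul]
        · rw [if_neg hcc]
          rcases le_or_gt ((j : ℤ)) (e - c + 1) with hj2 | hj2
          · rw [min_eq_right (by omega), add_zero, hUh1, mul_zero]
          · rw [min_eq_left (by omega)]
            rcases le_or_gt ((j : ℤ)) ((h : ℤ) + (e - c)) with hj3 | hj3
            · rw [hU0 _ (by omega) (by omega), mul_zero]
            · exfalso
              exact hcc ⟨by omega, by omega⟩
      rw [Finset.sum_congr rfl e1]
      have hsum : ∑ j ∈ Finset.range (h + 2), (if j = h + 1 ∧ e = c then (-1 : ZMod p) else 0)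
          = if e = c then -1 else 0 := by
        by_cases hec2 : e = c
        · subst hec2
          simp only [eq_self_iff_true, and_true, if_true]
          rw [Finset.sum_ite_eq' (Finset.range (h + 2)) (h + 1) (fun _ => (-1 : ZMod p)),
            if_pos (Finset.mem_range.mpr (by omega))]
        · simp [hec2]
      rw [hsum, min_eq_right (by omega : (0 : ℤ) ≤ e - c), add_zero, hUh1, mul_zero, zero_add]
  -- the recurrence for G
  have starG : ∀ e : ℤ, ∑ j ∈ Finset.range (h + 2), ((h + 1).choose j : ZMod p) * G (e + 1 - j)
      = M * G e + ∑ r ∈ Finset.Icc 1 h, (((h + 1).choose (r + 1)) : ZMod p)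
          * (if e = (r : ℤ) * Q then 1 else 0) := by
    intro e
    have expand : ∀ j ∈ Finset.range (h + 2), ((h + 1).choose j : ZMod p) * G (e + 1 - (j : ℤ))
        = -∑ r ∈ Finset.Icc 1 h, (((h + 1).choose (r + 1)) : ZMod p) *
            (((h + 1).choose j : ZMod p)
              * U ((h : ℤ) - 1 + min (e + 1 - (j : ℤ) - (r : ℤ) * Q) 0)) := by
      intro j _
      rw [hG, mul_neg, Finset.mul_sum]
      congr 1
      apply Finset.sum_congr rfl
      intro r _
      ring
    rw [Finset.sum_congr rfl expand, Finset.sum_neg_distrib, Finset.sum_comm]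
    have inner : ∀ r ∈ Finset.Icc 1 h, ∑ j ∈ Finset.range (h + 2),
        (((h + 1).choose (r + 1)) : ZMod p) * (((h + 1).choose j : ZMod p)
          * U ((h : ℤ) - 1 + min (e + 1 - (j : ℤ) - (r : ℤ) * Q) 0))
        = M * ((((h + 1).choose (r + 1)) : ZMod p) * U ((h : ℤ) - 1 + min (e - (r : ℤ) * Q) 0))
            - (((h + 1).choose (r + 1)) : ZMod p) * (if e = (r : ℤ) * Q then 1 else 0) := by
      intro r _
      rw [← Finset.mul_sum, starG1 ((r : ℤ) * Q) e]
      by_cases hc : e = (r : ℤ) * Q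
      · rw [if_pos hc, if_pos hc]; ring
      · rw [if_neg hc, if_neg hc]; ring
    rw [Finset.sum_congr rfl inner, Finset.sum_sub_distrib, hG]
    rw [show ∑ r ∈ Finset.Icc 1 h, M * ((((h + 1).choose (r + 1)) : ZMod p)
        * U ((h : ℤ) - 1 + min (e - (r : ℤ) * Q) 0))
      = M * ∑ r ∈ Finset.Icc 1 h, (((h + 1).choose (r + 1)) : ZMod p)
        * U ((h : ℤ) - 1 + min (e - (r : ℤ) * Q) 0) from (Finset.mul_sum _ _ _).symm]
    ring
  have baseF : ∀ e : ℤ, (h : ℤ) * Q - h + 1 ≤ e → F e = 0 := by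
    intro e he
    rw [hF]
    apply Finset.sum_eq_zero
    intro k hk
    simp only [Finset.mem_range] at hk
    have hk' : (k : ℤ) ≤ Q - 1 := by
      rw [hQdef]; exact_mod_cast Nat.le_sub_one_of_lt hk
    have hz : ibinom ((h + 1) * k) ((k : ℤ) + e) = 0 := by
      apply ibinom_eq_zero_of_lt
      have hmul : (h : ℤ) * k ≤ (h : ℤ) * (Q - 1) :=
        mul_le_mul_of_nonneg_left hk' (by positivity)
      push_cast
      nlinarith
    rw [hz, Nat.cast_zero, zero_mul]
  have baseG : ∀ e : ℤ, (h : ℤ) * Q - h + 1 ≤ e → G e = 0 := by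
    intro e he
    rw [hG, neg_eq_zero]
    apply Finset.sum_eq_zero
    intro r hr
    simp only [Finset.mem_Icc] at hr
    have hrQ : (r : ℤ) * Q ≤ (h : ℤ) * Q :=
      mul_le_mul_of_nonneg_right (by exact_mod_cast hr.2) (by positivity)
    rcases le_or_gt ((r : ℤ) * Q) e with hre | hre
    · rw [min_eq_right (by omega), add_zero, hUh1, mul_zero]
    · rw [min_eq_left (by omega), hU0 _ (by linarith) (by linarith), mul_zero]
  have key : ∀ n : ℕ, ∀ e : ℤ, 1 - (h : ℤ) ≤ e → (h : ℤ) * Q - h + 1 - n ≤ e → F e = G e := by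
    intro n
    have hh' : (1 : ℤ) ≤ (h : ℤ) := by exact_mod_cast hh
    induction n with
    | zero =>
      intro e he1 he2
      have he2' : (h : ℤ) * Q - h + 1 ≤ e := by push_cast at he2; linarith
      rw [baseF e he2', baseG e he2']
    | succ n ih =>
      intro e he1 he2
      by_cases hcase : (h : ℤ) * Q - h + 1 - n ≤ e
      · exact ih e he1 hcase
      · push_neg at hcase
        have he2' : (h : ℤ) * Q - h + 1 - (n + 1) ≤ e := by push_cast at he2; linarith
        have h1 := starF (e + h)
        have h2 := starG (e + h)
        rw [if_neg (by omega : ¬ e + (h : ℤ) = 0), mul_zero, sub_zero,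
          defectF (e + h) (by omega)] at h1
        rw [Finset.sum_range_succ] at h1 h2
        rw [show e + (h : ℤ) + 1 - ((h + 1 : ℕ) : ℤ) = e from by push_cast; ring] at h1 h2
        rw [Nat.choose_self, Nat.cast_one, one_mul] at h1 h2
        have hs : ∑ j ∈ Finset.range (h + 1), ((h + 1).choose j : ZMod p) * F (e + h + 1 - j)
            = ∑ j ∈ Finset.range (h + 1), ((h + 1).choose j : ZMod p) * G (e + h + 1 - j) := by
          apply Finset.sum_congr rfl
          intro j hj
          simp only [Finset.mem_range] at hj
          have hj' : (j : ℤ) ≤ (h : ℤ) := by exact_mod_cast Nat.lt_succ_iff.mp hj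
          rw [ih (e + h + 1 - j) (by omega) (by linarith)]
        have hFG : F (e + (h : ℤ)) = G (e + (h : ℤ)) := ih (e + h) (by omega) (by linarith)
        linear_combination h1 - h2 - hs + M * hFG
  have hcast : ((h * q : ℕ) : ℤ) = (h : ℤ) * Q := by rw [hQdef]; push_cast; ring
  refine key (h * q) d (by omega) ?_
  rw [hcast]
  linarith
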